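/- arXiv:2005.07587 — 2 statements merged into one kernel-verified Lean document; each statement's English description precedes it below -/
import Mathlib

section
/- Idealized estimator error bound: Let Ā be p×p symmetric PSD with top eigenvalue λ, unit top eigenvector x̄ ∈ K, second eigenvalue μ, eigengap ν = λ - μ > 0. Let A = Ā + E, and let v maximize u^T A u over u ∈ K ∩ S^{p-1} for a convex cone K. If v^T x̄ ≥ 0, then ‖v - x̄‖ ≤ min( sqrt(4‖E‖_K/ν), 8‖E‖_{T_K(x̄)}/ν ). -/
open Matrix

/-- Euclidean norm of a vector in `Fin p → ℝ`. -/
noncomputable def vecEnorm {p : ℕ} (v : Fin p → ℝ) : ℝ := Real.sqrt (v ⬝ᵥ v)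

/-- The cone-restricted operator seminorm
`‖E‖_C = sup_{x,y ∈ C, ‖x‖=‖y‖=1} |xᵀ E y|`. -/
noncomputable def coneNorm {p : ℕ} (C : Set (Fin p → ℝ)) (E : Matrix (Fin p) (Fin p) ℝ) : ℝ :=
  sSup {r : ℝ | ∃ x ∈ C, ∃ y ∈ C, vecEnorm x = 1 ∧ vecEnorm y = 1 ∧ r = |x ⬝ᵥ E.mulVec y|}

/-- The tangent cone of `K` at `x̄`: `T_K(x̄) = {t (w - x̄) : t ≥ 0, w ∈ K}`. -/
def tangentCone {p : ℕ} (K : Set (Fin p → ℝ)) (xbar : Fin p → ℝ) : Set (Fin p → ℝ) :=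
  {w | ∃ t : ℝ, 0 ≤ t ∧ ∃ u ∈ K, w = t • (u - xbar)}

lemma dp_self_nonneg {p : ℕ} (v : Fin p → ℝ) : 0 ≤ v ⬝ᵥ v := by
  apply Finset.sum_nonneg; intro i _; exact mul_self_nonneg _

lemma vecEnorm_nonneg' {p : ℕ} (v : Fin p → ℝ) : 0 ≤ vecEnorm v := Real.sqrt_nonneg _

lemma vecEnorm_sq {p : ℕ} (v : Fin p → ℝ) : vecEnorm v * vecEnorm v = v ⬝ᵥ v :=
  Real.mul_self_sqrt (dp_self_nonneg v)

lemma vecEnorm_one {p : ℕ} {v : Fin p → ℝ} (h : vecEnorm v = 1) : v ⬝ᵥ v = 1 := by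
  have := vecEnorm_sq v; rw [h] at this; linarith

lemma vecEnorm_smul' {p : ℕ} (t : ℝ) (ht : 0 ≤ t) (v : Fin p → ℝ) :
    vecEnorm (t • v) = t * vecEnorm v := by
  unfold vecEnorm
  rw [smul_dotProduct, dotProduct_smul, smul_eq_mul, smul_eq_mul, ← mul_assoc,
    Real.sqrt_mul (mul_self_nonneg t), Real.sqrt_mul_self ht]

lemma coord_abs_le {p : ℕ} {v : Fin p → ℝ} (h : vecEnorm v = 1) (i : Fin p) : |v i| ≤ 1 := by
  have h1 : v i * v i ≤ v ⬝ᵥ v := by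
    unfold dotProduct
    have := Finset.single_le_sum (f := fun j => v j * v j)
      (fun j _ => mul_self_nonneg (v j)) (Finset.mem_univ i)
    simpa using this
  rw [vecEnorm_one h] at h1
  nlinarith [abs_nonneg (v i), sq_abs (v i)]

lemma coneNorm_bdd {p : ℕ} (C : Set (Fin p → ℝ)) (E : Matrix (Fin p) (Fin p) ℝ) :
    BddAbove {r : ℝ | ∃ x ∈ C, ∃ y ∈ C, vecEnorm x = 1 ∧ vecEnorm y = 1 ∧ r = |x ⬝ᵥ E.mulVec y|} := by
  refine ⟨∑ i, ∑ j, |E i j|, ?_⟩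
  rintro r ⟨x, hx, y, hy, hx1, hy1, rfl⟩
  calc |x ⬝ᵥ E.mulVec y| ≤ ∑ i, |x i * (E.mulVec y) i| := Finset.abs_sum_le_sum_abs _ _
    _ ≤ ∑ i, ∑ j, |E i j| := by
        apply Finset.sum_le_sum; intro i _
        rw [abs_mul]
        calc |x i| * |(E.mulVec y) i| ≤ 1 * |(E.mulVec y) i| := by
              apply mul_le_mul_of_nonneg_right (coord_abs_le hx1 i) (abs_nonneg _)
          _ = |∑ j, E i j * y j| := by rw [one_mul]; rfl
          _ ≤ ∑ j, |E i j * y j| := Finset.abs_sum_le_sum_abs _ _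
          _ ≤ ∑ j, |E i j| := by
              apply Finset.sum_le_sum; intro j _
              rw [abs_mul]
              calc |E i j| * |y j| ≤ |E i j| * 1 :=
                    mul_le_mul_of_nonneg_left (coord_abs_le hy1 j) (abs_nonneg _)
                _ = |E i j| := mul_one _

lemma le_coneNorm {p : ℕ} {C : Set (Fin p → ℝ)} (E : Matrix (Fin p) (Fin p) ℝ)
    {x y : Fin p → ℝ} (hx : x ∈ C) (hy : y ∈ C) (hx1 : vecEnorm x = 1) (hy1 : vecEnorm y = 1) :
    |x ⬝ᵥ E.mulVec y| ≤ coneNorm C E :=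
  le_csSup (coneNorm_bdd C E) ⟨x, hx, y, hy, hx1, hy1, rfl⟩

lemma coneNorm_nonneg {p : ℕ} {C : Set (Fin p → ℝ)} (E : Matrix (Fin p) (Fin p) ℝ)
    {x : Fin p → ℝ} (hx : x ∈ C) (hx1 : vecEnorm x = 1) : 0 ≤ coneNorm C E :=
  le_trans (abs_nonneg _) (le_coneNorm E hx hx hx1 hx1)

/-- Scaling bound on a cone-closed set. -/
lemma dp_le_coneNorm {p : ℕ} {C : Set (Fin p → ℝ)} (E : Matrix (Fin p) (Fin p) ℝ)
    (hC : ∀ (t : ℝ), 0 ≤ t → ∀ x ∈ C, t • x ∈ C)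
    {a b : Fin p → ℝ} (ha : a ∈ C) (hb : b ∈ C) :
    |a ⬝ᵥ E.mulVec b| ≤ vecEnorm a * vecEnorm b * coneNorm C E := by
  by_cases ha0 : a = 0
  · simp [ha0, vecEnorm]
  by_cases hb0 : b = 0
  · simp [hb0, vecEnorm, Matrix.mulVec_zero]
  have haa : 0 < a ⬝ᵥ a := lt_of_le_of_ne (dp_self_nonneg a)
    (fun h => ha0 (dotProduct_self_eq_zero.mp h.symm))
  have hbb : 0 < b ⬝ᵥ b := lt_of_le_of_ne (dp_self_nonneg b)
    (fun h => hb0 (dotProduct_self_eq_zero.mp h.symm))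
  have hna : 0 < vecEnorm a := Real.sqrt_pos.mpr haa
  have hnb : 0 < vecEnorm b := Real.sqrt_pos.mpr hbb
  set a' := (vecEnorm a)⁻¹ • a with ha'
  set b' := (vecEnorm b)⁻¹ • b with hb'
  have ha'1 : vecEnorm a' = 1 := by
    rw [ha', vecEnorm_smul' _ (inv_nonneg.mpr hna.le), inv_mul_cancel₀ hna.ne']
  have hb'1 : vecEnorm b' = 1 := by
    rw [hb', vecEnorm_smul' _ (inv_nonneg.mpr hnb.le), inv_mul_cancel₀ hnb.ne']
  have ha'C : a' ∈ C := hC _ (inv_nonneg.mpr hna.le) a ha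
  have hb'C : b' ∈ C := hC _ (inv_nonneg.mpr hnb.le) b hb
  have key := le_coneNorm E ha'C hb'C ha'1 hb'1
  have hdp : a' ⬝ᵥ E.mulVec b' = (vecEnorm a)⁻¹ * ((vecEnorm b)⁻¹ * (a ⬝ᵥ E.mulVec b)) := by
    rw [ha', hb', Matrix.mulVec_smul, smul_dotProduct, dotProduct_smul]
    simp [smul_eq_mul]
  rw [hdp] at key
  rw [abs_mul, abs_mul, abs_of_nonneg (inv_nonneg.mpr hna.le),
    abs_of_nonneg (inv_nonneg.mpr hnb.le)] at key
  calc |a ⬝ᵥ E.mulVec b| =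
      vecEnorm a * vecEnorm b * ((vecEnorm a)⁻¹ * ((vecEnorm b)⁻¹ * |a ⬝ᵥ E.mulVec b|)) := by
        field_simp
    _ ≤ vecEnorm a * vecEnorm b * coneNorm C E :=
        mul_le_mul_of_nonneg_left key (mul_nonneg (vecEnorm_nonneg' a) (vecEnorm_nonneg' b))

lemma dp_symm {p : ℕ} {A : Matrix (Fin p) (Fin p) ℝ} (h : Aᵀ = A) (x y : Fin p → ℝ) :
    x ⬝ᵥ A.mulVec y = y ⬝ᵥ A.mulVec x := by
  nth_rewrite 1 [← h]
  rw [dotProduct_mulVec, vecMul_transpose, dotProduct_comm]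

/-- Error bound for the idealized estimator `v ∈ argmax_{u ∈ K ∩ S} uᵀ A u` with
`A = Ā + E`, when `vᵀ x̄ ≥ 0`:
`‖v - x̄‖ ≤ min( √(4‖E‖_K/ν), 8‖E‖_{T_K(x̄)}/ν )` where `ν = λ - μ`. -/
theorem idealized_estimator_error_pos {p : ℕ}
    (K : ConvexCone ℝ (Fin p → ℝ))
    (Abar E A : Matrix (Fin p) (Fin p) ℝ) (hAbar : Abar.PosSemidef)
    (hAdef : A = Abar + E)
    (lam mu : ℝ) (xbar : Fin p → ℝ)
    (hxbarK : xbar ∈ K) (hxbar : vecEnorm xbar = 1)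
    (heig : Abar.mulVec xbar = lam • xbar)
    (hml : mu < lam)
    (hmu : ∀ y : Fin p → ℝ, vecEnorm y = 1 → y ⬝ᵥ xbar = 0 → y ⬝ᵥ Abar.mulVec y ≤ mu)
    (v : Fin p → ℝ) (hvK : v ∈ K) (hv : vecEnorm v = 1)
    (hmax : ∀ u ∈ K, vecEnorm u = 1 → u ⬝ᵥ A.mulVec u ≤ v ⬝ᵥ A.mulVec v)
    (halign : 0 ≤ v ⬝ᵥ xbar) :
    vecEnorm (v - xbar) ≤
      min (Real.sqrt (4 * coneNorm (K : Set (Fin p → ℝ)) E / (lam - mu)))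
        (8 * coneNorm (tangentCone (K : Set (Fin p → ℝ)) xbar) E / (lam - mu)) := by
  have hsymA : Abarᵀ = Abar := hAbar.1
  set ν := lam - mu with hνdef
  clear_value ν
  have hν : 0 < ν := by rw [hνdef]; linarith
  set c := v ⬝ᵥ xbar with hc
  clear_value c
  have hv2 : v ⬝ᵥ v = 1 := vecEnorm_one hv
  have hx2 : xbar ⬝ᵥ xbar = 1 := vecEnorm_one hxbar
  set D := v - xbar with hD
  clear_value D
  have hDD : D ⬝ᵥ D = 2 - 2 * c := by
    rw [hD]
    rw [sub_dotProduct, dotProduct_sub, dotProduct_sub, hv2, hx2, dotProduct_comm xbar v, hc]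
    ring
  have hc1 : c ≤ 1 := by
    have := dp_self_nonneg D; rw [hDD] at this; linarith
  -- Step A: curvature
  have hxAx : xbar ⬝ᵥ Abar.mulVec xbar = lam := by
    rw [heig, dotProduct_smul, smul_eq_mul, hx2, mul_one]
  set w := v - c • xbar with hw
  clear_value w
  have hwx : w ⬝ᵥ xbar = 0 := by
    rw [hw, sub_dotProduct, smul_dotProduct, smul_eq_mul, hx2, mul_one, ← hc, sub_self]
  have hww : w ⬝ᵥ w = 1 - c ^ 2 := by
    rw [hw]
    simp only [sub_dotProduct, dotProduct_sub, smul_dotProduct, dotProduct_smul,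
      smul_eq_mul, hv2, hx2, dotProduct_comm xbar v, ← hc]
    ring
  have hwAw : w ⬝ᵥ Abar.mulVec w ≤ mu * (1 - c ^ 2) := by
    by_cases hw0 : w = 0
    · have : (1 : ℝ) - c ^ 2 = 0 := by rw [← hww, hw0]; simp
      rw [hw0]; simp [this]
    · have hwwpos : 0 < w ⬝ᵥ w := lt_of_le_of_ne (dp_self_nonneg w)
        (fun h => hw0 (dotProduct_self_eq_zero.mp h.symm))
      set s := vecEnorm w with hs
      have hspos : 0 < s := Real.sqrt_pos.mpr hwwpos
      set y := s⁻¹ • w with hy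
      have hy1 : vecEnorm y = 1 := by
        rw [hy, vecEnorm_smul' _ (inv_nonneg.mpr hspos.le), inv_mul_cancel₀ hspos.ne']
      have hyx : y ⬝ᵥ xbar = 0 := by rw [hy, smul_dotProduct, hwx, smul_zero]
      have hyAy := hmu y hy1 hyx
      have hexp : y ⬝ᵥ Abar.mulVec y = s⁻¹ * s⁻¹ * (w ⬝ᵥ Abar.mulVec w) := by
        rw [hy, Matrix.mulVec_smul, smul_dotProduct, dotProduct_smul]
        simp only [smul_eq_mul]; ring
      have hs2 : s * s = 1 - c ^ 2 := by rw [hs, vecEnorm_sq, hww]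
      have : w ⬝ᵥ Abar.mulVec w = s * s * (y ⬝ᵥ Abar.mulVec y) := by
        rw [hexp]; field_simp
      rw [this, hs2]
      have h1c : 0 ≤ 1 - c ^ 2 := by nlinarith [hwwpos, hs2, mul_pos hspos hspos]
      calc (1 - c ^ 2) * (y ⬝ᵥ Abar.mulVec y) ≤ (1 - c ^ 2) * mu :=
            mul_le_mul_of_nonneg_left hyAy h1c
        _ = mu * (1 - c ^ 2) := mul_comm _ _
  have hvAv : v ⬝ᵥ Abar.mulVec v ≤ c ^ 2 * lam + mu * (1 - c ^ 2) := by
    have hveq : v = c • xbar + w := by rw [hw]; abel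
    have hxAw : xbar ⬝ᵥ Abar.mulVec w = 0 := by
      rw [dp_symm hsymA, heig, dotProduct_smul, smul_eq_mul, hwx, mul_zero]
    have hwAx : w ⬝ᵥ Abar.mulVec xbar = 0 := by
      rw [heig, dotProduct_smul, smul_eq_mul, hwx, mul_zero]
    have hexp : v ⬝ᵥ Abar.mulVec v =
        c ^ 2 * (xbar ⬝ᵥ Abar.mulVec xbar) + c * (xbar ⬝ᵥ Abar.mulVec w)
          + c * (w ⬝ᵥ Abar.mulVec xbar) + w ⬝ᵥ Abar.mulVec w := by
      nth_rewrite 1 [hveq]; nth_rewrite 1 [hveq]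
      simp only [Matrix.mulVec_add, Matrix.mulVec_smul, dotProduct_add, add_dotProduct,
        smul_dotProduct, dotProduct_smul, smul_eq_mul]
      ring
    rw [hexp, hxAx, hxAw, hwAx]
    simp only [mul_zero, add_zero]
    linarith [hwAw]
  -- Step B: optimality transfers error to E
  have hopt : lam + xbar ⬝ᵥ E.mulVec xbar ≤ v ⬝ᵥ Abar.mulVec v + v ⬝ᵥ E.mulVec v := by
    have := hmax xbar hxbarK hxbar
    rw [hAdef] at this
    rw [Matrix.add_mulVec, dotProduct_add, Matrix.add_mulVec, dotProduct_add, hxAx] at this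
    linarith
  set Δ := v ⬝ᵥ E.mulVec v - xbar ⬝ᵥ E.mulVec xbar with hΔ
  clear_value Δ
  have hkey : ν * (1 - c ^ 2) ≤ Δ := by
    have : lam - v ⬝ᵥ Abar.mulVec v ≥ (1 - c ^ 2) * ν := by
      have : c ^ 2 * lam + mu * (1 - c ^ 2) = lam - (1 - c ^ 2) * ν := by
        rw [hνdef]; ring
      linarith [hvAv, this]
    linarith [hopt]
  have hhalf : ν / 2 * (D ⬝ᵥ D) ≤ ν * (1 - c ^ 2) := by
    rw [hDD]
    nlinarith [mul_nonneg (mul_nonneg hν.le (sub_nonneg.mpr hc1)) halign]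
  have hmain : ν / 2 * (D ⬝ᵥ D) ≤ Δ := le_trans hhalf hkey
  -- Bound I
  have hNK : 0 ≤ coneNorm (K : Set (Fin p → ℝ)) E :=
    coneNorm_nonneg E hxbarK hxbar
  have hbound1 : Δ ≤ 2 * coneNorm (K : Set (Fin p → ℝ)) E := by
    have h1 := abs_le.mp (le_coneNorm E hvK hvK hv hv)
    have h2 := abs_le.mp (le_coneNorm E hxbarK hxbarK hxbar hxbar)
    rw [hΔ]
    linarith [h1.1, h1.2, h2.1, h2.2]
  have hfirst : vecEnorm D ≤ Real.sqrt (4 * coneNorm (K : Set (Fin p → ℝ)) E / ν) := by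
    unfold vecEnorm
    apply Real.sqrt_le_sqrt
    rw [le_div_iff₀ hν]
    nlinarith [hmain, hbound1, hν]
  -- Bound II
  set T := tangentCone (K : Set (Fin p → ℝ)) xbar with hT
  clear_value T
  have hTcone : ∀ (t : ℝ), 0 ≤ t → ∀ x ∈ T, t • x ∈ T := by
    rw [hT]
    rintro t ht x ⟨s, hs, u, hu, rfl⟩
    exact ⟨t * s, mul_nonneg ht hs, u, hu, smul_smul t s _⟩
  have hxT : xbar ∈ T := by
    rw [hT]
    refine ⟨1, zero_le_one, (2 : ℝ) • xbar, K.smul_mem two_pos hxbarK, ?_⟩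
    rw [one_smul, two_smul]; abel
  have hDT : D ∈ T := by rw [hT]; exact ⟨1, zero_le_one, v, hvK, by rw [hD, one_smul]⟩
  have hNT : 0 ≤ coneNorm T E := coneNorm_nonneg E hxT hxbar
  have hDnorm_sq : vecEnorm D * vecEnorm D = D ⬝ᵥ D := vecEnorm_sq D
  have hDle2 : vecEnorm D ≤ 2 := by
    nlinarith [vecEnorm_nonneg' D, hDD, halign, hDnorm_sq]
  have hbound2 : Δ ≤ 4 * vecEnorm D * coneNorm T E := by
    have hexp : Δ = D ⬝ᵥ E.mulVec D + D ⬝ᵥ E.mulVec xbar + xbar ⬝ᵥ E.mulVec D := by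
      rw [hΔ, hD]
      simp only [Matrix.mulVec_sub, dotProduct_sub, sub_dotProduct]
      ring
    have h1 : |D ⬝ᵥ E.mulVec D| ≤ vecEnorm D * vecEnorm D * coneNorm T E :=
      dp_le_coneNorm E hTcone hDT hDT
    have h2 : |D ⬝ᵥ E.mulVec xbar| ≤ vecEnorm D * 1 * coneNorm T E := by
      have := dp_le_coneNorm E hTcone hDT hxT
      rwa [hxbar] at this
    have h3 : |xbar ⬝ᵥ E.mulVec D| ≤ 1 * vecEnorm D * coneNorm T E := by
      have := dp_le_coneNorm E hTcone hxT hDT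
      rwa [hxbar] at this
    have m1 : D ⬝ᵥ E.mulVec D ≤ vecEnorm D * vecEnorm D * coneNorm T E := (le_abs_self _).trans h1
    have m2 : D ⬝ᵥ E.mulVec xbar ≤ vecEnorm D * 1 * coneNorm T E := (le_abs_self _).trans h2
    have m3 : xbar ⬝ᵥ E.mulVec D ≤ 1 * vecEnorm D * coneNorm T E := (le_abs_self _).trans h3
    have hd2 : vecEnorm D * vecEnorm D ≤ 2 * vecEnorm D :=
      mul_le_mul_of_nonneg_right hDle2 (vecEnorm_nonneg' D)
    have m4 : vecEnorm D * vecEnorm D * coneNorm T E ≤ 2 * vecEnorm D * coneNorm T E :=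
      mul_le_mul_of_nonneg_right hd2 hNT
    rw [hexp]
    linarith [m1, m2, m3, m4]
  have hsecond : vecEnorm D ≤ 8 * coneNorm T E / ν := by
    by_cases hD0 : vecEnorm D = 0
    · rw [hD0]; exact div_nonneg (by linarith [hNT]) hν.le
    · have hDpos : 0 < vecEnorm D := lt_of_le_of_ne (vecEnorm_nonneg' D) (Ne.symm hD0)
      rw [le_div_iff₀ hν]
      have h4 : ν / 2 * (vecEnorm D * vecEnorm D) ≤ 4 * vecEnorm D * coneNorm T E := by
        rw [hDnorm_sq]; exact le_trans hmain hbound2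
      have h5 : vecEnorm D * (vecEnorm D * ν) ≤ vecEnorm D * (8 * coneNorm T E) := by
        linarith [h4]
      exact le_of_mul_le_mul_left h5 hDpos
  exact le_min hfirst hsecond
end

section
/- Idealized estimator, negative alignment case: In the setting of the idealized estimator (v maximizes u^T A u over K ∩ S^{p-1}, A = Ā + E, x̄ the unit top eigenvector of Ā with eigengap ν > 0), if v^T x̄ ≤ 0 then ‖v + x̄‖ ≤ min( sqrt(4‖E‖_K/ν), 8‖E‖_K/ν ). -/
open Matrix

namespace IdealizedAux

variable {p : ℕ}

lemma dot_self_nonneg (v : Fin p → ℝ) : 0 ≤ v ⬝ᵥ v :=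
  Finset.sum_nonneg fun _ _ => mul_self_nonneg _

lemma enorm_sq (v : Fin p → ℝ) : vecEnorm v ^ 2 = v ⬝ᵥ v := Real.sq_sqrt (dot_self_nonneg v)

lemma enorm_nonneg' (v : Fin p → ℝ) : 0 ≤ vecEnorm v := Real.sqrt_nonneg _

lemma dot_self_of_unit {v : Fin p → ℝ} (h : vecEnorm v = 1) : v ⬝ᵥ v = 1 := by
  have := enorm_sq v
  rw [h] at this; linarith

lemma cauchy (a b : Fin p → ℝ) : |a ⬝ᵥ b| ≤ vecEnorm a * vecEnorm b := by
  have h := Finset.sum_mul_sq_le_sq_mul_sq Finset.univ a b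
  have h2 : (a ⬝ᵥ b)^2 ≤ (a ⬝ᵥ a) * (b ⬝ᵥ b) := by
    simpa [dotProduct, pow_two] using h
  have := Real.sqrt_le_sqrt h2
  rwa [Real.sqrt_sq_eq_abs, Real.sqrt_mul (dot_self_nonneg a)] at this

lemma symm_dot (M : Matrix (Fin p) (Fin p) ℝ) (h : M.IsHermitian) (x y : Fin p → ℝ) :
    x ⬝ᵥ M.mulVec y = y ⬝ᵥ M.mulVec x := by
  rw [Matrix.dotProduct_mulVec, ← Matrix.mulVec_transpose]
  rw [show Mᵀ = M from by have := h.eq; rwa [Matrix.conjTranspose_eq_transpose_of_trivial] at this]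
  exact dotProduct_comm _ _

lemma enorm_mulVec_le (E : Matrix (Fin p) (Fin p) ℝ) (y : Fin p → ℝ) (hy : vecEnorm y = 1) :
    vecEnorm (E.mulVec y) ≤ Real.sqrt (∑ i, (E i) ⬝ᵥ (E i)) := by
  apply Real.sqrt_le_sqrt
  have : ∀ i, (E.mulVec y i)^2 ≤ (E i) ⬝ᵥ (E i) := by
    intro i
    have h := cauchy (E i) y
    have h2 : |E.mulVec y i| ≤ vecEnorm (E i) := by
      simpa [Matrix.mulVec, hy] using h
    calc (E.mulVec y i)^2 = |E.mulVec y i|^2 := by rw [sq_abs]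
      _ ≤ vecEnorm (E i)^2 := by
          apply pow_le_pow_left₀ (abs_nonneg _) h2
      _ = (E i) ⬝ᵥ (E i) := enorm_sq _
  calc (E.mulVec y) ⬝ᵥ (E.mulVec y) = ∑ i, (E.mulVec y i)^2 := by
        simp [dotProduct, pow_two]
    _ ≤ ∑ i, (E i) ⬝ᵥ (E i) := Finset.sum_le_sum fun i _ => this i

lemma coneSet_bddAbove (C : Set (Fin p → ℝ)) (E : Matrix (Fin p) (Fin p) ℝ) :
    BddAbove {r : ℝ | ∃ x ∈ C, ∃ y ∈ C, vecEnorm x = 1 ∧ vecEnorm y = 1 ∧ r = |x ⬝ᵥ E.mulVec y|} := by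
  refine ⟨Real.sqrt (∑ i, (E i) ⬝ᵥ (E i)), ?_⟩
  rintro r ⟨x, _, y, _, hx1, hy1, rfl⟩
  calc |x ⬝ᵥ E.mulVec y| ≤ vecEnorm x * vecEnorm (E.mulVec y) := cauchy _ _
    _ ≤ 1 * Real.sqrt (∑ i, (E i) ⬝ᵥ (E i)) := by
        rw [hx1]; exact mul_le_mul_of_nonneg_left (enorm_mulVec_le E y hy1) one_pos.le
    _ = _ := one_mul _

lemma abs_dot_le_coneNorm {C : Set (Fin p → ℝ)} {E : Matrix (Fin p) (Fin p) ℝ}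
    {x y : Fin p → ℝ} (hx : x ∈ C) (hy : y ∈ C) (hx1 : vecEnorm x = 1) (hy1 : vecEnorm y = 1) :
    |x ⬝ᵥ E.mulVec y| ≤ coneNorm C E :=
  le_csSup (coneSet_bddAbove C E) ⟨x, hx, y, hy, hx1, hy1, rfl⟩

lemma coneNorm_nonneg {C : Set (Fin p → ℝ)} {E : Matrix (Fin p) (Fin p) ℝ}
    {x : Fin p → ℝ} (hx : x ∈ C) (hx1 : vecEnorm x = 1) : 0 ≤ coneNorm C E :=
  le_trans (abs_nonneg _) (abs_dot_le_coneNorm hx hx hx1 hx1)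

lemma smul_unit {w : Fin p → ℝ} (hw : w ≠ 0) : vecEnorm ((vecEnorm w)⁻¹ • w) = 1 := by
  have h0 : 0 < w ⬝ᵥ w := by
    rcases lt_or_eq_of_le (dot_self_nonneg w) with h | h
    · exact h
    · exact absurd (dotProduct_self_eq_zero.mp h.symm) hw
  have hn : 0 < vecEnorm w := Real.sqrt_pos.mpr h0
  have hsq : vecEnorm w ^ 2 = w ⬝ᵥ w := enorm_sq w
  have key : ((vecEnorm w)⁻¹ • w) ⬝ᵥ ((vecEnorm w)⁻¹ • w) = 1 := by
    rw [smul_dotProduct, dotProduct_smul, smul_eq_mul, smul_eq_mul, ← hsq]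
    field_simp
  rw [vecEnorm, key, Real.sqrt_one]

/-- Scaled cone-norm bound: for `x ∈ C` unit and `w ∈ C` arbitrary. -/
lemma dot_le_coneNorm_scaled {C : ConvexCone ℝ (Fin p → ℝ)} {E : Matrix (Fin p) (Fin p) ℝ}
    {x w : Fin p → ℝ} (hx : x ∈ C) (hw : w ∈ C) (hx1 : vecEnorm x = 1) :
    |x ⬝ᵥ E.mulVec w| ≤ vecEnorm w * coneNorm (C : Set (Fin p → ℝ)) E ∧
    |w ⬝ᵥ E.mulVec x| ≤ vecEnorm w * coneNorm (C : Set (Fin p → ℝ)) E := by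
  by_cases h0 : w = 0
  · simp [h0, vecEnorm, Matrix.mulVec_zero]
  · have h0' : 0 < w ⬝ᵥ w := by
      rcases lt_or_eq_of_le (dot_self_nonneg w) with h | h
      · exact h
      · exact absurd (dotProduct_self_eq_zero.mp h.symm) h0
    have hn : 0 < vecEnorm w := Real.sqrt_pos.mpr h0'
    set u := (vecEnorm w)⁻¹ • w with hu
    have huC : u ∈ C := C.smul_mem (by positivity) hw
    have hu1 : vecEnorm u = 1 := smul_unit h0
    have hwu : w = vecEnorm w • u := by
      rw [hu, smul_smul, mul_inv_cancel₀ hn.ne', one_smul]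
    constructor
    · have heq : x ⬝ᵥ E.mulVec w = vecEnorm w * (x ⬝ᵥ E.mulVec u) := by
        have : x ⬝ᵥ E.mulVec u = (vecEnorm w)⁻¹ * (x ⬝ᵥ E.mulVec w) := by
          rw [hu, Matrix.mulVec_smul, dotProduct_smul, smul_eq_mul]
        rw [this]; field_simp
      rw [heq, abs_mul, abs_of_nonneg hn.le]
      exact mul_le_mul_of_nonneg_left (abs_dot_le_coneNorm hx huC hx1 hu1) hn.le
    · have heq : w ⬝ᵥ E.mulVec x = vecEnorm w * (u ⬝ᵥ E.mulVec x) := by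
        have : u ⬝ᵥ E.mulVec x = (vecEnorm w)⁻¹ * (w ⬝ᵥ E.mulVec x) := by
          rw [hu, smul_dotProduct, smul_eq_mul]
        rw [this]; field_simp
      rw [heq, abs_mul, abs_of_nonneg hn.le]
      exact mul_le_mul_of_nonneg_left (abs_dot_le_coneNorm huC hx hu1 hx1) hn.le

end IdealizedAux

open IdealizedAux

set_option maxHeartbeats 1000000 in
/-- Error bound for the idealized estimator `v ∈ argmax_{u ∈ K ∩ S} uᵀ A u` with
`A = Ā + E`, in the negative-alignment case `vᵀ x̄ ≤ 0`:
`‖v + x̄‖ ≤ min( √(4‖E‖_K/ν), 8‖E‖_K/ν )` where `ν = λ - μ`. -/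
theorem idealized_estimator_error_neg {p : ℕ}
    (K : ConvexCone ℝ (Fin p → ℝ))
    (Abar E A : Matrix (Fin p) (Fin p) ℝ) (hAbar : Abar.PosSemidef)
    (hAdef : A = Abar + E)
    (lam mu : ℝ) (xbar : Fin p → ℝ)
    (hxbarK : xbar ∈ K) (hxbar : vecEnorm xbar = 1)
    (heig : Abar.mulVec xbar = lam • xbar)
    (hml : mu < lam)
    (hmu : ∀ y : Fin p → ℝ, vecEnorm y = 1 → y ⬝ᵥ xbar = 0 → y ⬝ᵥ Abar.mulVec y ≤ mu)
    (v : Fin p → ℝ) (hvK : v ∈ K) (hv : vecEnorm v = 1)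
    (hmax : ∀ u ∈ K, vecEnorm u = 1 → u ⬝ᵥ A.mulVec u ≤ v ⬝ᵥ A.mulVec v)
    (halign : v ⬝ᵥ xbar ≤ 0) :
    vecEnorm (v + xbar) ≤
      min (Real.sqrt (4 * coneNorm (K : Set (Fin p → ℝ)) E / (lam - mu)))
        (8 * coneNorm (K : Set (Fin p → ℝ)) E / (lam - mu)) := by
  set ε := coneNorm (K : Set (Fin p → ℝ)) E with hε
  have hεnn : 0 ≤ ε := coneNorm_nonneg hxbarK hxbar
  have hν : 0 < lam - mu := sub_pos.mpr hml
  have hx1 : xbar ⬝ᵥ xbar = 1 := dot_self_of_unit hxbar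
  have hv1 : v ⬝ᵥ v = 1 := dot_self_of_unit hv
  set c := v ⬝ᵥ xbar with hc
  have hcge : -1 ≤ c := by
    have := cauchy v xbar
    rw [hv, hxbar, one_mul] at this
    exact neg_le_of_abs_le this
  -- w := orthogonal component
  set w : Fin p → ℝ := v - c • xbar with hw
  have hwx : w ⬝ᵥ xbar = 0 := by
    simp [hw, sub_dotProduct, smul_dotProduct, hx1, ← hc, smul_eq_mul]
  have hxw : xbar ⬝ᵥ w = 0 := by rw [dotProduct_comm]; exact hwx
  have hxv : xbar ⬝ᵥ v = c := by rw [hc, dotProduct_comm]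
  have hww : w ⬝ᵥ w = 1 - c^2 := by
    simp only [hw, sub_dotProduct, dotProduct_sub, smul_dotProduct,
      dotProduct_smul, smul_eq_mul, hv1, hx1, hxv, ← hc]
    ring
  -- second-eigenvalue bound on w
  have hwAw : w ⬝ᵥ Abar.mulVec w ≤ mu * (1 - c^2) := by
    by_cases h0 : w = 0
    · have hz : 1 - c^2 = 0 := by rw [← hww, h0]; simp
      rw [h0, hz, Matrix.mulVec_zero, dotProduct_zero, mul_zero]
    · have h0' : 0 < w ⬝ᵥ w := by
        rcases lt_or_eq_of_le (dot_self_nonneg w) with h | h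
        · exact h
        · exact absurd (dotProduct_self_eq_zero.mp h.symm) h0
      have hn : 0 < vecEnorm w := Real.sqrt_pos.mpr h0'
      set u := (vecEnorm w)⁻¹ • w with hu
      have hu1 : vecEnorm u = 1 := smul_unit h0
      have hux : u ⬝ᵥ xbar = 0 := by
        simp [hu, smul_dotProduct, hwx, smul_eq_mul]
      have huAu := hmu u hu1 hux
      have hexp : u ⬝ᵥ Abar.mulVec u = (vecEnorm w)⁻¹ * ((vecEnorm w)⁻¹ * (w ⬝ᵥ Abar.mulVec w)) := by
        simp only [hu, Matrix.mulVec_smul, smul_dotProduct, dotProduct_smul,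
          smul_eq_mul]
      have hsq : vecEnorm w ^ 2 = 1 - c^2 := by rw [enorm_sq, hww]
      rw [hexp] at huAu
      have : w ⬝ᵥ Abar.mulVec w ≤ mu * (vecEnorm w ^2) := by
        rw [pow_two]
        calc w ⬝ᵥ Abar.mulVec w
            = vecEnorm w * (vecEnorm w * ((vecEnorm w)⁻¹ * ((vecEnorm w)⁻¹ * (w ⬝ᵥ Abar.mulVec w)))) := by
              field_simp
          _ ≤ vecEnorm w * (vecEnorm w * mu) := by
              apply mul_le_mul_of_nonneg_left _ hn.le
              exact mul_le_mul_of_nonneg_left huAu hn.le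
          _ = mu * (vecEnorm w * vecEnorm w) := by ring
      rwa [hsq] at this
  -- eigenvalue expansion of v ⬝ᵥ Ā v
  have hsym := hAbar.1
  have hwAx : w ⬝ᵥ Abar.mulVec xbar = 0 := by
    rw [heig, dotProduct_smul, smul_eq_mul, hwx, mul_zero]
  have hxAw : xbar ⬝ᵥ Abar.mulVec w = 0 := by
    rw [symm_dot Abar hsym]; exact hwAx
  have hxAx : xbar ⬝ᵥ Abar.mulVec xbar = lam := by
    rw [heig, dotProduct_smul, smul_eq_mul, hx1, mul_one]
  have hvdecomp : v = w + c • xbar := by rw [hw]; abel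
  have hvAv : v ⬝ᵥ Abar.mulVec v = w ⬝ᵥ Abar.mulVec w + c^2 * lam := by
    rw [hvdecomp]
    simp [Matrix.mulVec_add, Matrix.mulVec_smul, add_dotProduct,
      dotProduct_add, smul_dotProduct, dotProduct_smul,
      smul_eq_mul, hwAx, hxAw, hxAx]
    ring
  -- curvature bound
  have hcurv : (lam - mu) * (1 + c) ≤ lam - v ⬝ᵥ Abar.mulVec v := by
    rw [hvAv]
    nlinarith [hwAw, mul_nonneg (mul_nonneg hν.le (by linarith : (0:ℝ) ≤ 1 + c))
      (by linarith : (0:ℝ) ≤ -c)]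
  -- optimality
  have hopt := hmax xbar hxbarK hxbar
  rw [hAdef] at hopt
  have hoptE : lam - v ⬝ᵥ Abar.mulVec v ≤ v ⬝ᵥ E.mulVec v - xbar ⬝ᵥ E.mulVec xbar := by
    have h1 : xbar ⬝ᵥ (Abar + E).mulVec xbar = lam + xbar ⬝ᵥ E.mulVec xbar := by
      rw [Matrix.add_mulVec, dotProduct_add, hxAx]
    have h2 : v ⬝ᵥ (Abar + E).mulVec v = v ⬝ᵥ Abar.mulVec v + v ⬝ᵥ E.mulVec v := by
      rw [Matrix.add_mulVec, dotProduct_add]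
    rw [h1, h2] at hopt
    linarith
  -- E bounds
  have hEv : |v ⬝ᵥ E.mulVec v| ≤ ε := abs_dot_le_coneNorm hvK hvK hv hv
  have hEx : |xbar ⬝ᵥ E.mulVec xbar| ≤ ε := abs_dot_le_coneNorm hxbarK hxbarK hxbar hxbar
  have hD1 : v ⬝ᵥ E.mulVec v - xbar ⬝ᵥ E.mulVec xbar ≤ 2 * ε := by
    have := abs_le.mp hEv
    have := abs_le.mp hEx
    linarith [(abs_le.mp hEv).2, (abs_le.mp hEx).1]
  -- second bound via v + xbar
  set t := vecEnorm (v + xbar) with ht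
  have htnn : 0 ≤ t := enorm_nonneg' _
  have htsq : t^2 = 2 + 2*c := by
    rw [ht, enorm_sq]
    simp [add_dotProduct, dotProduct_add, hv1, hx1, ← hc,
      dotProduct_comm xbar v]
    ring
  have hsumK : v + xbar ∈ K := K.add_mem hvK hxbarK
  have hD2 : v ⬝ᵥ E.mulVec v - xbar ⬝ᵥ E.mulVec xbar ≤ 2 * t * ε := by
    have hdecomp : v ⬝ᵥ E.mulVec v - xbar ⬝ᵥ E.mulVec xbar
        = v ⬝ᵥ E.mulVec (v + xbar) - (v + xbar) ⬝ᵥ E.mulVec xbar := by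
      rw [Matrix.mulVec_add, dotProduct_add, add_dotProduct]
      ring
    have h1 := (dot_le_coneNorm_scaled (E := E) hvK hsumK hv).1
    have h2 := (dot_le_coneNorm_scaled (E := E) hxbarK hsumK hxbar).2
    rw [hdecomp]
    have h1' := (abs_le.mp h1).2
    have h2' := (abs_le.mp h2).1
    rw [← ht] at h1' h2'
    linarith
  -- combine: (lam - mu)(1+c) ≤ min(2ε, 2tε)
  have key1 : (lam - mu) * (1 + c) ≤ 2 * ε := le_trans hcurv (le_trans hoptE hD1)
  have key2 : (lam - mu) * (1 + c) ≤ 2 * t * ε := le_trans hcurv (le_trans hoptE hD2)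
  apply le_min
  · -- t ≤ sqrt(4ε/ν)
    have htsq_le : t^2 ≤ 4 * ε / (lam - mu) := by
      rw [le_div_iff₀ hν, htsq]
      nlinarith
    calc t = Real.sqrt (t^2) := (Real.sqrt_sq htnn).symm
      _ ≤ Real.sqrt (4 * ε / (lam - mu)) := Real.sqrt_le_sqrt htsq_le
  · -- t ≤ 8ε/ν
    rcases eq_or_lt_of_le htnn with h0 | h0
    · rw [← h0]
      exact div_nonneg (by linarith) hν.le
    · rw [le_div_iff₀ hν]
      have : (lam - mu) * t^2 ≤ 4 * t * ε := by
        rw [htsq]; nlinarith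
      nlinarith
end
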